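/- Let ρ > 0 and q ≥ 1 be an integer, and fix a nonnegative integer N. Consider f(q) = (qρ)^{qN}/(qN)! · (∑_{n=0}^{qN} (qρ)ⁿ/n!)⁻¹, the probability that a truncated Poisson(qρ) variable on {0,…,qN} equals its maximum value qN. If ρ < 1, then f(q) → 0 as q → ∞. -/

import Mathlib

open Filter

theorem stmt_12 (ρ : ℝ) (hρ0 : 0 < ρ) (hρ1 : ρ < 1) (N : ℕ) (hN : 1 ≤ N) :
    Filter.Tendsto
      (fun q : ℕ =>
        ((q * ρ) ^ (q * N) / Nat.factorial (q * N)) /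
          (∑ n ∈ Finset.range (q * N + 1), (q * ρ) ^ n / Nat.factorial n))
      Filter.atTop (nhds 0) := by
  have hN0 : (0:ℝ) < N := by exact_mod_cast hN
  set f := fun q : ℕ =>
        ((q * ρ) ^ (q * N) / Nat.factorial (q * N)) /
          (∑ n ∈ Finset.range (q * N + 1), (q * ρ) ^ n / Nat.factorial n) with hf
  have hfnn : ∀ q, 0 ≤ f q := by
    intro q
    apply div_nonneg
    · positivity
    · apply Finset.sum_nonneg
      intro n _
      positivity
  rw [Metric.tendsto_atTop]
  intro ε hε
  have hρN0 : 0 ≤ ρ / N := by positivity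
  have hρN1 : ρ / N < 1 := by
    rw [div_lt_one hN0]
    calc ρ < 1 := hρ1
    _ ≤ (N:ℝ) := by exact_mod_cast hN
  obtain ⟨m, hm⟩ : ∃ m : ℕ, (ρ / N) ^ m < ε := exists_pow_lt_of_lt_one hε hρN1
  set g := fun q : ℕ => ((q * ρ) / (((q * N - m : ℕ) : ℝ) + 1)) ^ m with hg
  -- limit of g is (ρ/N)^m
  have hc : Tendsto (fun q : ℕ => ((q:ℝ) * N - m + 1) / q) atTop (nhds N) := by
    have h0 : Tendsto (fun q : ℕ => (N:ℝ) + (1 - m) / q) atTop (nhds (N + 0)) :=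
      tendsto_const_nhds.add (tendsto_const_div_atTop_nhds_zero_nat _)
    rw [add_zero] at h0
    apply h0.congr'
    filter_upwards [eventually_ge_atTop 1] with q hq
    have hq0 : (q:ℝ) ≠ 0 := by positivity
    field_simp
    ring
  have hb : Tendsto (fun q : ℕ => (q * ρ) / ((q:ℝ) * N - m + 1)) atTop (nhds (ρ / N)) := by
    have := (tendsto_const_nhds (x := ρ) (f := atTop (α := ℕ))).div hc (ne_of_gt hN0)
    apply this.congr
    intro q
    simp only [Pi.div_apply]
    rw [div_div_eq_mul_div, mul_comm]
  have hgt : Tendsto g atTop (nhds ((ρ / N) ^ m)) := by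
    apply (hb.pow m).congr'
    filter_upwards [eventually_ge_atTop m] with q hq
    have hmq : m ≤ q * N := le_trans hq (Nat.le_mul_of_pos_right q (by omega))
    have : (((q * N - m : ℕ)) : ℝ) = (q:ℝ) * N - m := by
      push_cast [Nat.cast_sub hmq]
      ring
    simp [hg, this]
  have H1 : ∀ᶠ q in atTop, g q < ε := hgt.eventually_lt_const hm
  have H2 : ∀ᶠ q in atTop, f q ≤ g q := by
    filter_upwards [eventually_ge_atTop (m + 1)] with q hq
    have hq1 : 1 ≤ q := le_trans (Nat.le_add_left 1 m) hq
    set K := q * N with hK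
    have hmK : m + 1 ≤ K := le_trans hq (Nat.le_mul_of_pos_right q (by omega))
    set x := (q:ℝ) * ρ with hx
    have hx0 : 0 < x := by
      apply mul_pos _ hρ0
      exact_mod_cast hq1
    have hterm : x ^ (K - m) / Nat.factorial (K - m) ≤
        ∑ n ∈ Finset.range (K + 1), x ^ n / Nat.factorial n := by
      apply Finset.single_le_sum (f := fun n => x ^ n / (Nat.factorial n : ℝ))
      · intro n _; positivity
      · simp [Finset.mem_range]
    have hpos : 0 < x ^ (K - m) / Nat.factorial (K - m) := by positivity
    have step1 : f q ≤ (x ^ K / Nat.factorial K) / (x ^ (K - m) / Nat.factorial (K - m)) := by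
      apply div_le_div_of_nonneg_left _ hpos hterm
      positivity
    refine step1.trans ?_
    -- now show the term ratio bound
    have hfac : ((Nat.factorial (K - m) : ℝ) * ((K - m : ℕ) + 1) ^ m) ≤ Nat.factorial K := by
      have h := Nat.factorial_mul_pow_le_factorial (m := K - m) (n := m)
      have hKm : K - m + m = K := by omega
      rw [hKm] at h
      exact_mod_cast h
    have hxK : x ^ K = x ^ (K - m) * x ^ m := by
      rw [← pow_add]
      congr 1
      omega
    have key : (x ^ K / Nat.factorial K) / (x ^ (K - m) / Nat.factorial (K - m))
        = x ^ m * (Nat.factorial (K - m) / Nat.factorial K) := by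
      rw [hxK]
      have h1 : (0:ℝ) < x ^ (K - m) := by positivity
      have h2 : (0:ℝ) < (Nat.factorial K : ℝ) := by positivity
      have h3 : (0:ℝ) < (Nat.factorial (K - m) : ℝ) := by positivity
      field_simp
    rw [key]
    show x ^ m * ((Nat.factorial (K - m) : ℝ) / Nat.factorial K)
        ≤ (x / (((K - m : ℕ) : ℝ) + 1)) ^ m
    calc x ^ m * ((Nat.factorial (K - m) : ℝ) / Nat.factorial K)
        ≤ x ^ m * (Nat.factorial (K - m) /
            ((Nat.factorial (K - m) : ℝ) * ((K - m : ℕ) + 1) ^ m)) := by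
          apply mul_le_mul_of_nonneg_left _ (by positivity)
          apply div_le_div_of_nonneg_left _ _ hfac
          · positivity
          · positivity
      _ = x ^ m / (((K - m : ℕ) : ℝ) + 1) ^ m := by
          have h3 : (0:ℝ) < (Nat.factorial (K - m) : ℝ) := by positivity
          rw [div_mul_eq_div_div, div_self (ne_of_gt h3), one_div, ← div_eq_mul_inv]
      _ = (x / (((K - m : ℕ) : ℝ) + 1)) ^ m := by rw [div_pow]
  -- combine
  rcases Filter.eventually_atTop.mp (H1.and H2) with ⟨Q, hQ⟩
  refine ⟨Q, fun q hq => ?_⟩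
  rw [Real.dist_eq, sub_zero, abs_of_nonneg (hfnn q)]
  exact lt_of_le_of_lt (hQ q hq).2 (hQ q hq).1
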